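/- Let G be a finite group with exactly s non-central conjugacy classes, where s ≥ 1. Then |G| < (s+1) · ∏_{i=0}^{s-1} (s+1-i)^(2^(s-1-i)). -/

import Mathlib

private def Lb : ℕ → ℕ → ℕ
  | 0, q => q
  | (k+1), q => Lb k ((k+2) * q^2)

private lemma Lb_closed : ∀ k q, Lb k q = q ^ (2^k) * ∏ i ∈ Finset.range k, (i+2) ^ (2^i)
  | 0, q => by simp [Lb]
  | (k+1), q => by
    rw [show Lb (k+1) q = Lb k ((k+2) * q^2) from rfl, Lb_closed k, Finset.prod_range_succ,
      mul_pow, ← pow_mul]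
    have h2 : q ^ (2 * 2 ^ k) = q ^ (2 ^ (k+1)) := by rw [pow_succ, mul_comm]
    rw [h2]; ring

private lemma Lb_mono (k : ℕ) {q q' : ℕ} (h : q ≤ q') : Lb k q ≤ Lb k q' := by
  rw [Lb_closed, Lb_closed]
  exact Nat.mul_le_mul_right _ (Nat.pow_le_pow_left h _)

private lemma le_Lb (k q : ℕ) : q ≤ Lb k q := by
  rw [Lb_closed]
  calc q ≤ q ^ (2^k) := Nat.le_self_pow (by positivity) q
    _ ≤ _ := Nat.le_mul_of_pos_right _ (Finset.prod_pos fun i _ => by positivity)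

private def inv' (y : ℕ) : ℚ := 1 / (y : ℚ)

private lemma exists_small (M : Multiset ℕ) (hM : M ≠ 0) (hpos : ∀ y ∈ M, 1 ≤ y)
    (hsum : (1:ℚ) ≤ (M.map inv').sum) : ∃ y ∈ M, y ≤ Multiset.card M := by
  have hTne : M.toFinset.Nonempty := by
    simpa [Multiset.toFinset_nonempty] using hM
  set y₀ := M.toFinset.min' hTne with hy₀
  have hy₀M : y₀ ∈ M := Multiset.mem_toFinset.mp (M.toFinset.min'_mem hTne)
  refine ⟨y₀, hy₀M, ?_⟩
  have hy₀pos : (0:ℚ) < y₀ := by exact_mod_cast hpos _ hy₀M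
  have hle : (M.map inv').sum ≤ Multiset.card M • inv' y₀ := by
    rw [← Multiset.card_map inv' M]
    apply Multiset.sum_le_card_nsmul
    intro x hx
    obtain ⟨y, hyM, rfl⟩ := Multiset.mem_map.mp hx
    have h1 : (y₀ : ℚ) ≤ y := by exact_mod_cast M.toFinset.min'_le y (Multiset.mem_toFinset.mpr hyM)
    exact one_div_le_one_div_of_le hy₀pos h1
  have h2 : (1:ℚ) ≤ Multiset.card M • inv' y₀ := le_trans hsum hle
  rw [nsmul_eq_mul] at h2
  have h3 : (y₀ : ℚ) ≤ Multiset.card M := by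
    rw [inv', mul_one_div, le_div_iff₀ hy₀pos, one_mul] at h2
    exact h2
  exact_mod_cast h3

private lemma landau : ∀ (k : ℕ) (M : Multiset ℕ) (q : ℕ), 1 ≤ q → Multiset.card M = k + 1 →
    (∀ y ∈ M, 1 ≤ y) →
    (∃ p : ℕ, 1 ≤ p ∧ (M.map inv').sum * q = p) →
    ∀ y ∈ M, y ≤ Lb k q := by
  intro k
  induction k with
  | zero =>
    rintro M q hq hcard hpos ⟨p, hp, hsum⟩ y hy
    obtain ⟨a, rfl⟩ := Multiset.card_eq_one.mp hcard
    rw [Multiset.mem_singleton] at hy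
    subst hy
    rw [Multiset.map_singleton, Multiset.sum_singleton] at hsum
    have ha : (0:ℚ) < y := by exact_mod_cast hpos y (Multiset.mem_singleton_self y)
    have hcast : (q : ℚ) = p * y := by
      rw [inv'] at hsum
      field_simp at hsum
      linarith [hsum]
    have hq' : q = p * y := by exact_mod_cast hcast
    have hle : y ≤ p * y := Nat.le_mul_of_pos_left y hp
    simpa [Lb, ← hq'] using hle
  | succ k ih =>
    rintro M q hq hcard hpos ⟨p, hp, hsum⟩ y hy
    have hM : M ≠ 0 := by
      intro h; rw [h] at hcard; simp at hcard
    have hTne : M.toFinset.Nonempty := by simpa [Multiset.toFinset_nonempty] using hM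
    set y₀ := M.toFinset.min' hTne with hy₀def
    have hy₀M : y₀ ∈ M := Multiset.mem_toFinset.mp (M.toFinset.min'_mem hTne)
    have hy₀1 : 1 ≤ y₀ := hpos _ hy₀M
    have hy₀pos : (0:ℚ) < y₀ := by exact_mod_cast hy₀1
    have hqpos : (0:ℚ) < q := by exact_mod_cast hq
    set S := (M.map inv').sum with hSdef
    have hSq : S = p / q := by
      rw [eq_div_iff (ne_of_gt hqpos)]; exact hsum
    have hSle : S ≤ ((k:ℚ)+2) * (1/y₀) := by
      have hle : S ≤ Multiset.card M • inv' y₀ := by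
        rw [hSdef, ← Multiset.card_map inv' M]
        apply Multiset.sum_le_card_nsmul
        intro x hx
        obtain ⟨y', hyM, rfl⟩ := Multiset.mem_map.mp hx
        have h1 : (y₀ : ℚ) ≤ y' := by
          exact_mod_cast M.toFinset.min'_le y' (Multiset.mem_toFinset.mpr hyM)
        exact one_div_le_one_div_of_le hy₀pos h1
      rw [hcard, nsmul_eq_mul, inv'] at hle
      convert hle using 2
      push_cast; ring
    have hy₀le : y₀ ≤ (k+2) * q := by
      have h1 : (1:ℚ)/q ≤ p/q := by gcongr; exact_mod_cast hp
      have h2 : (1:ℚ)/q ≤ ((k:ℚ)+2) * (1/y₀) := le_trans (h1.trans hSq.ge) hSle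
      have h3 : (y₀ : ℚ) ≤ ((k:ℚ)+2) * q := by
        rw [mul_one_div, div_le_div_iff₀ hqpos hy₀pos, one_mul] at h2
        linarith
      exact_mod_cast h3
    set M' := M.erase y₀ with hM'def
    have hcons : y₀ ::ₘ M' = M := Multiset.cons_erase hy₀M
    have hM'card : Multiset.card M' = k + 1 := by
      have hcc := congrArg Multiset.card hcons
      rw [Multiset.card_cons, hcard] at hcc
      omega
    have hM'pos : ∀ y' ∈ M', 1 ≤ y' := fun y' h =>
      hpos y' (by rw [← hcons]; exact Multiset.mem_cons_of_mem h)
    set S' := (M'.map inv').sum with hS'def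
    have hS'eq : S = 1/(y₀:ℚ) + S' := by
      rw [hSdef, ← hcons, Multiset.map_cons, Multiset.sum_cons, hS'def, inv']
    have hS'pos : 0 < S' := by
      have hne : M' ≠ 0 := by
        intro h; rw [h] at hM'card; simp at hM'card
      obtain ⟨y', hy'⟩ := Multiset.exists_mem_of_ne_zero hne
      have hy'pos : (0:ℚ) < y' := by exact_mod_cast hM'pos y' hy'
      have h1 : inv' y' ≤ S' := by
        apply Multiset.single_le_sum
        · intro x hx
          obtain ⟨y'', hy'', rfl⟩ := Multiset.mem_map.mp hx
          rw [inv']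
          positivity
        · exact Multiset.mem_map_of_mem _ hy'
      have h2 : (0:ℚ) < inv' y' := by rw [inv']; positivity
      linarith
    have hkey : S' * ((q:ℚ) * y₀) = p * y₀ - q := by
      have hS'v : S' = S - 1/(y₀:ℚ) := by rw [hS'eq]; ring
      rw [hS'v, hSq]
      field_simp
      try ring
    have hqlt : q < p * y₀ := by
      have h0 : (0:ℚ) < (p:ℚ) * y₀ - q := by rw [← hkey]; positivity
      have h1 : (q:ℚ) < (p:ℚ) * y₀ := by linarith
      exact_mod_cast h1
    have hsum' : ∃ p' : ℕ, 1 ≤ p' ∧ S' * ((q * y₀ : ℕ) : ℚ) = p' := by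
      refine ⟨p * y₀ - q, by omega, ?_⟩
      push_cast [Nat.cast_sub hqlt.le]
      try rw [hkey]
      try exact hkey
    have hbound := ih M' (q * y₀)
      (Nat.one_le_iff_ne_zero.mpr (Nat.mul_ne_zero (by omega) (by omega))) hM'card hM'pos hsum'
    have hLb : Lb (k+1) q = Lb k ((k+2) * q^2) := rfl
    have harg : q * y₀ ≤ (k+2) * q^2 := by nlinarith
    rw [← hcons] at hy
    rcases Multiset.mem_cons.mp hy with hcase | hy'
    · rw [hcase]
      calc y₀ ≤ (k+2) * q := hy₀le
        _ ≤ (k+2) * q^2 := by nlinarith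
        _ ≤ Lb k ((k+2) * q^2) := le_Lb _ _
        _ = Lb (k+1) q := hLb.symm
    · calc y ≤ Lb k (q * y₀) := hbound y hy'
        _ ≤ Lb k ((k+2) * q^2) := Lb_mono k harg
        _ = Lb (k+1) q := hLb.symm


private lemma class_card_mul {G : Type*} [Group G] [Finite G] (g : G) :
    Nat.card (ConjClasses.mk g).carrier * Nat.card (Subgroup.centralizer ({g} : Set G)) =
      Nat.card G := by
  classical
  cases nonempty_fintype G
  have h1 : Nat.card (MulAction.orbit (ConjAct G) g) *
      Nat.card (MulAction.stabilizer (ConjAct G) g) = Nat.card (ConjAct G) := by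
    rw [← Nat.card_prod]
    exact Nat.card_congr (MulAction.orbitProdStabilizerEquivGroup (ConjAct G) g)
  rw [ConjAct.orbit_eq_carrier_conjClasses] at h1
  have h2 : Nat.card (Subgroup.centralizer ({g} : Set G)) =
      Nat.card (MulAction.stabilizer (ConjAct G) g) := by
    rw [Subgroup.centralizer_eq_comap_stabilizer]
    erw [Subgroup.comap_equiv_eq_map_symm']
    exact (Nat.card_congr ((MulAction.stabilizer (ConjAct G) g).equivMapOfInjective
      _ (MulEquiv.injective _)).toEquiv).symm
  have h3 : Nat.card (ConjAct G) = Nat.card G :=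
    Nat.card_congr ConjAct.ofConjAct.toEquiv
  rw [h2, h1, h3]

private lemma notcenter_iff {G : Type*} [Group G] (x : G) :
    x ∉ Subgroup.center G ↔ (conjugatesOf x).Nontrivial := by
  constructor
  · intro hx
    rw [Subgroup.mem_center_iff] at hx
    push_neg at hx
    obtain ⟨g, hg⟩ := hx
    refine ⟨g * x * g⁻¹, ?_, x, mem_conjugatesOf_self, ?_⟩
    · exact isConj_iff.mpr ⟨g, rfl⟩
    · intro h
      apply hg
      have : g * x * g⁻¹ * g = x * g := by rw [h]
      simpa [mul_assoc] using this
  · intro hnt hx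
    obtain ⟨a, ha, b, hb, hab⟩ := hnt
    apply hab
    rw [Subgroup.mem_center_iff] at hx
    have key : ∀ y ∈ conjugatesOf x, y = x := by
      intro y hy
      obtain ⟨g, hg⟩ := isConj_iff.mp hy
      rw [← hg, hx g, mul_inv_cancel_right]
    rw [key a ha, key b hb]

private lemma mk_out' {G : Type*} [Group G] (c : ConjClasses G) : ConjClasses.mk (Quotient.out c) = c := by
  rw [← ConjClasses.quotient_mk_eq_mk]
  exact Quotient.out_eq (s := IsConj.setoid G) c

private noncomputable def mSize {G : Type*} [Group G] (c : ConjClasses G) : ℕ :=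
  Nat.card (Subgroup.centralizer ({Quotient.out c} : Set G))

/-- **Theorem A with `n = 1`.** If a finite group `G` has exactly `s ≥ 1`
non-central conjugacy classes, then `|G| < (s+1) · ∏_{i=0}^{s-1} (s+1-i)^(2^(s-1-i))`. -/
theorem card_lt_of_noncentral_classes
    {G : Type*} [Group G] [Finite G] (s : ℕ) (hs : 1 ≤ s)
    (hcl : {C : Set G | ∃ x : G, x ∉ Subgroup.center G ∧ C = conjugatesOf x}.ncard = s) :
    Nat.card G < (s + 1) * ∏ i ∈ Finset.range s, (s + 1 - i) ^ 2 ^ (s - 1 - i) := by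
  classical
  set n := Nat.card G with hn
  set z := Nat.card (Subgroup.center G) with hz
  have hn1 : 1 ≤ n := Nat.one_le_iff_ne_zero.mpr Nat.card_pos.ne'
  have hz1 : 1 ≤ z := Nat.card_pos
  have hzn : z ∣ n := Subgroup.card_subgroup_dvd_card _
  have hn0 : (n : ℚ) ≠ 0 := by exact_mod_cast Nat.one_le_iff_ne_zero.mp hn1
  have hz0 : (z : ℚ) ≠ 0 := by exact_mod_cast Nat.one_le_iff_ne_zero.mp hz1
  have hfin : (ConjClasses.noncenter G).Finite := Set.toFinite _
  set F : Finset (ConjClasses G) := hfin.toFinset with hF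
  have hmemF : ∀ c, c ∈ F ↔ c.carrier.Nontrivial := by
    intro c
    rw [hF, Set.Finite.mem_toFinset, ConjClasses.mem_noncenter]
  -- card F = s
  have himage : {C : Set G | ∃ x : G, x ∉ Subgroup.center G ∧ C = conjugatesOf x}
      = ConjClasses.carrier '' (ConjClasses.noncenter G) := by
    ext C
    simp only [Set.mem_setOf_eq, Set.mem_image, ConjClasses.mem_noncenter]
    constructor
    · rintro ⟨x, hx, rfl⟩
      exact ⟨ConjClasses.mk x, (notcenter_iff x).mp hx, rfl⟩
    · rintro ⟨c, hc, rfl⟩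
      refine ⟨Quotient.out c, ?_, ?_⟩
      · rw [notcenter_iff]
        have : (ConjClasses.mk (Quotient.out c)).carrier = conjugatesOf (Quotient.out c) := rfl
        rw [← this, mk_out' c]
        exact hc
      · have : (ConjClasses.mk (Quotient.out c)).carrier = conjugatesOf (Quotient.out c) := rfl
        rw [← this, mk_out' c]
  have hinj : Set.InjOn ConjClasses.carrier (ConjClasses.noncenter G) := by
    intro c₁ _ c₂ _ h
    have h1 : Quotient.out c₁ ∈ c₁.carrier := by
      rw [ConjClasses.mem_carrier_iff_mk_eq, mk_out']
    rw [h, ConjClasses.mem_carrier_iff_mk_eq, mk_out'] at h1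
    exact h1
  have hFcard : F.card = s := by
    rw [← hcl, himage, Set.ncard_image_of_injOn hinj, Set.ncard_eq_toFinset_card _ hfin]
  -- per-class facts
  have hmc_mul : ∀ c ∈ F, Nat.card c.carrier * mSize c = n := by
    intro c _
    have h := class_card_mul (Quotient.out c)
    rw [mk_out' c] at h
    exact h
  have hm1 : ∀ c : ConjClasses G, 1 ≤ mSize c := fun c => Nat.card_pos
  have hzm : ∀ c : ConjClasses G, z ∣ mSize c := fun c =>
    Subgroup.card_dvd_of_le (Subgroup.center_le_centralizer _)
  have h2z : ∀ c ∈ F, 2 * z ≤ mSize c := by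
    intro c hc
    have hne : z ≠ mSize c := by
      intro heq
      have hEq : Subgroup.center G = Subgroup.centralizer ({Quotient.out c} : Set G) :=
        Subgroup.eq_of_le_of_card_ge (Subgroup.center_le_centralizer _) heq.ge
      have hout : Quotient.out c ∈ Subgroup.centralizer ({Quotient.out c} : Set G) :=
        Subgroup.mem_centralizer_singleton_iff.mpr rfl
      rw [← hEq] at hout
      have hnt : (conjugatesOf (Quotient.out c)).Nontrivial := by
        have hcar : (ConjClasses.mk (Quotient.out c)).carrier = conjugatesOf (Quotient.out c) := rfl
        rw [← hcar, mk_out' c]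
        exact (hmemF c).mp hc
      exact ((notcenter_iff _).mpr hnt) hout
    obtain ⟨t, ht⟩ := hzm c
    have hm1c := hm1 c
    have ht2 : 2 ≤ t := by
      rcases t with _ | _ | t
      · omega
      · exfalso; apply hne; omega
      · omega
    calc 2 * z ≤ t * z := Nat.mul_le_mul_right z ht2
      _ = mSize c := by rw [ht]; ring
  have hmn : ∀ c : ConjClasses G, mSize c ∣ n := fun c => Subgroup.card_subgroup_dvd_card _
  -- the multiset
  set N := n / z with hNdef
  have hzN : z * N = n := Nat.mul_div_cancel' hzn
  have hN1 : 1 ≤ N := by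
    rcases Nat.eq_zero_or_pos N with h | h
    · rw [h, mul_zero] at hzN; omega
    · exact h
  set M : Multiset ℕ := N ::ₘ F.val.map mSize with hMdef
  have hMcard : Multiset.card M = s + 1 := by
    rw [hMdef, Multiset.card_cons, Multiset.card_map]
    rw [show Multiset.card F.val = F.card from rfl, hFcard]
  have hpos : ∀ y ∈ M, 1 ≤ y := by
    intro y hy
    rw [hMdef] at hy
    rcases Multiset.mem_cons.mp hy with rfl | hy'
    · exact hN1
    · obtain ⟨c, _, rfl⟩ := Multiset.mem_map.mp hy'
      exact hm1 c
  -- class equation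
  have hclass : z + ∑ c ∈ F, Nat.card c.carrier = n := by
    have h := Group.nat_card_center_add_sum_card_noncenter_eq_card G
    rw [← hfin.coe_toFinset, finsum_mem_coe_finset] at h
    exact h
  -- the sum of reciprocals is 1
  have hinvN : inv' N = (z : ℚ) / n := by
    rw [inv', hNdef]
    rw [Nat.cast_div hzn hz0]
    rw [one_div_div]
  have hinvm : ∀ c ∈ F, inv' (mSize c) = (Nat.card c.carrier : ℚ) / n := by
    intro c hc
    have h := hmc_mul c hc
    have hm0 : ((mSize c : ℕ) : ℚ) ≠ 0 := by
      exact_mod_cast Nat.one_le_iff_ne_zero.mp (hm1 c)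
    rw [inv', div_eq_div_iff hm0 hn0, one_mul]
    exact_mod_cast h.symm
  have hSum : (M.map inv').sum = 1 := by
    rw [hMdef, Multiset.map_cons, Multiset.sum_cons, Multiset.map_map]
    have h2 : (F.val.map (inv' ∘ mSize)).sum = ∑ c ∈ F, inv' (mSize c) := by
      rw [Finset.sum_eq_multiset_sum]
      rfl
    rw [h2, hinvN, Finset.sum_congr rfl hinvm, ← Finset.sum_div]
    rw [← add_div, div_eq_one_iff_eq hn0]
    exact_mod_cast congrArg (Nat.cast : ℕ → ℚ) hclass
  -- landau bounds
  set Q' := Lb s 1 with hQ'def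
  have hQ'1 : 1 ≤ Q' := le_Lb s 1
  have hlandau : ∀ y ∈ M, y ≤ Q' := by
    have hcards : Multiset.card M = (s - 1) + 1 + 1 := by rw [hMcard]; omega
    have h := landau s M 1 le_rfl (by rw [hMcard]) hpos ⟨1, le_rfl, by rw [hSum]; simp⟩
    exact h
  have hNQ : N ≤ Q' := hlandau N (Multiset.mem_cons_self _ _)
  have hmQ : ∀ c ∈ F, mSize c ≤ Q' := by
    intro c hc
    exact hlandau (mSize c)
      (Multiset.mem_cons_of_mem (Multiset.mem_map_of_mem mSize (Finset.mem_val.mpr hc)))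
  -- a small element
  have hsmall : ∃ y ∈ M, y ≤ s + 1 := by
    have hM0 : M ≠ 0 := by
      intro h
      rw [h] at hMcard; simp at hMcard
    obtain ⟨y, hyM, hyle⟩ := exists_small M hM0 hpos (by rw [hSum])
    exact ⟨y, hyM, by rwa [hMcard] at hyle⟩
  obtain ⟨c₀, hc₀⟩ := Finset.card_pos.mp (by rw [hFcard]; omega)
  -- main bound : 2 * n ≤ (s+1) * Q'
  have hmain : 2 * n ≤ (s + 1) * Q' := by
    obtain ⟨y, hyM, hyle⟩ := hsmall
    rw [hMdef] at hyM
    rcases Multiset.mem_cons.mp hyM with hcase | hy'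
    · rw [hcase] at hyle
      calc 2 * n = (2 * z) * N := by rw [← hzN]; ring
        _ ≤ mSize c₀ * (s + 1) := Nat.mul_le_mul (h2z c₀ hc₀) hyle
        _ ≤ Q' * (s + 1) := Nat.mul_le_mul_right _ (hmQ c₀ hc₀)
        _ = (s + 1) * Q' := by ring
    · obtain ⟨c₁, hc₁, hceq⟩ := Multiset.mem_map.mp hy'
      subst hceq
      have hc₁' : c₁ ∈ F := Finset.mem_val.mp hc₁
      calc 2 * n = (2 * z) * N := by rw [← hzN]; ring
        _ ≤ mSize c₁ * Q' := Nat.mul_le_mul (h2z c₁ hc₁') hNQ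
        _ ≤ (s + 1) * Q' := Nat.mul_le_mul_right _ hyle
  -- rewrite the product
  have hQeq : ∏ i ∈ Finset.range s, (s + 1 - i) ^ 2 ^ (s - 1 - i) = Q' := by
    rw [hQ'def, Lb_closed, one_pow, one_mul]
    rw [← Finset.prod_range_reflect]
    apply Finset.prod_congr rfl
    intro j hj
    have hjs := Finset.mem_range.mp hj
    have e1 : s + 1 - (s - 1 - j) = j + 2 := by omega
    have e2 : s - 1 - (s - 1 - j) = j := by omega
    rw [e1, e2]
  rw [hQeq]
  omega
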